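/- Let M₁ and M₂ be R-modules and let N₁, N₂ be proper submodules of M₁ and M₂ respectively. If N₁ × N₂ is a weakly classical 1-absorbing prime submodule of the R-module M₁ × M₂, then N₁ is a weakly classical 1-absorbing prime submodule of M₁ and N₂ is a weakly classical 1-absorbing prime submodule of M₂. -/
import Mathlib


/-- A proper submodule `N` of `M` is weakly classical 1-absorbing prime if whenever
`abcm ∈ N` and `abcm ≠ 0` for nonunits `a, b, c ∈ R` and `m ∈ M`, then `abm ∈ N` or `cm ∈ N`. -/
def IsWeaklyClassical1AbsorbingPrime {R : Type*} [CommRing R] {M : Type*} [AddCommGroup M]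
    [Module R M] (N : Submodule R M) : Prop :=
  N ≠ ⊤ ∧ ∀ a b c : R, ∀ m : M, ¬ IsUnit a → ¬ IsUnit b → ¬ IsUnit c →
    (a * b * c) • m ∈ N → (a * b * c) • m ≠ 0 → ((a * b) • m ∈ N ∨ c • m ∈ N)

/-- A proper ideal `I` of `R` is weakly 1-absorbing prime if whenever `abc ∈ I` and
`abc ≠ 0` for nonunits `a, b, c ∈ R`, then `ab ∈ I` or `c ∈ I`. -/
def IsWeakly1AbsorbingPrimeIdeal {R : Type*} [CommRing R] (I : Ideal R) : Prop :=
  I ≠ ⊤ ∧ ∀ a b c : R, ¬ IsUnit a → ¬ IsUnit b → ¬ IsUnit c →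
    a * b * c ∈ I → a * b * c ≠ 0 → (a * b ∈ I ∨ c ∈ I)

/-- If `N₁ × N₂` is a weakly classical 1-absorbing prime submodule of
`M₁ × M₂`, then `N₁` and `N₂` are weakly classical 1-absorbing prime submodules of
`M₁` and `M₂` respectively. -/
theorem stmt_17 {R : Type*} [CommRing R] [Nontrivial R] {M₁ M₂ : Type*} [AddCommGroup M₁]
    [Module R M₁] [Nontrivial M₁] [AddCommGroup M₂] [Module R M₂] [Nontrivial M₂]
    (N₁ : Submodule R M₁) (N₂ : Submodule R M₂) (hN₁ : N₁ ≠ ⊤) (hN₂ : N₂ ≠ ⊤)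
    (h : IsWeaklyClassical1AbsorbingPrime (N₁.prod N₂)) :
    IsWeaklyClassical1AbsorbingPrime N₁ ∧ IsWeaklyClassical1AbsorbingPrime N₂ := by
  obtain ⟨-, h⟩ := h
  constructor
  · refine ⟨hN₁, fun a b c m ha hb hc hmem hne => ?_⟩
    have := h a b c (m, 0) ha hb hc (by simpa using hmem)
      (by simp [Prod.ext_iff, hne])
    simpa [Submodule.mem_prod, Submodule.smul_mem] using this
  · refine ⟨hN₂, fun a b c m ha hb hc hmem hne => ?_⟩
    have := h a b c (0, m) ha hb hc (by simpa using hmem)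
      (by simp [Prod.ext_iff, hne])
    simpa [Submodule.mem_prod, Submodule.smul_mem] using this
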